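/- Let X be a metric space, c : Set X → [0, ∞] a set function, M ≥ 0 a constant, and ν, (ν_j)_{j∈ℕ} finite Borel measures on X such that ν_j(A) ≤ M·c(A) and ν(A) ≤ M·c(A) for every Borel set A and every j. Let u : X → ℝ be a bounded Borel measurable function that is c-quasicontinuous. If ∫ φ dν_j → ∫ φ dν for every bounded continuous function φ : X → ℝ, then ∫ g·u dν_j → ∫ g·u dν for every bounded continuous function g : X → ℝ. -/

import Mathlib

open MeasureTheory Filter

/-- A function `h` is `c`-quasicontinuous if for every `ε > 0` there is an open set `G`
with `c G < ε` such that the restriction of `h` to the complement of `G` is continuous. -/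
def QuasiContinuous {X : Type*} [TopologicalSpace X] (c : Set X → ENNReal) (h : X → ℝ) : Prop :=
  ∀ ε : ENNReal, 0 < ε → ∃ G : Set X, IsOpen G ∧ c G < ε ∧ ContinuousOn h Gᶜ

/-- Abstract quasicontinuity argument from the proof of Theorem 3: if the measures `ν_j`, `ν`
are uniformly dominated by `M·c`, `u` is bounded, Borel and `c`-quasicontinuous, and
`∫ φ dν_j → ∫ φ dν` for every bounded continuous `φ`, then `∫ g·u dν_j → ∫ g·u dν`
for every bounded continuous `g`. -/
theorem stmt8 {X : Type*} [MetricSpace X] [MeasurableSpace X] [BorelSpace X]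
    (c : Set X → ENNReal) (M : ℝ) (hM : 0 ≤ M)
    (ν : Measure X) (νs : ℕ → Measure X)
    (hν : IsFiniteMeasure ν) (hνs : ∀ j, IsFiniteMeasure (νs j))
    (hdomν : ∀ A : Set X, MeasurableSet A → ν A ≤ ENNReal.ofReal M * c A)
    (hdomνs : ∀ j, ∀ A : Set X, MeasurableSet A → νs j A ≤ ENNReal.ofReal M * c A)
    (u : X → ℝ) (hu : Measurable u) (B : ℝ) (hB : ∀ x, |u x| ≤ B)
    (huqc : QuasiContinuous c u)
    (hconv : ∀ φ : X → ℝ, Continuous φ → (∃ b : ℝ, ∀ x, |φ x| ≤ b) →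
      Tendsto (fun j => ∫ x, φ x ∂(νs j)) atTop (nhds (∫ x, φ x ∂ν)))
    (g : X → ℝ) (hg : Continuous g) (hgb : ∃ b : ℝ, ∀ x, |g x| ≤ b) :
    Tendsto (fun j => ∫ x, g x * u x ∂(νs j)) atTop (nhds (∫ x, g x * u x ∂ν)) := by
  classical
  obtain ⟨b0, hb0⟩ := hgb
  set b : ℝ := max b0 0 with hbdef
  have hgb' : ∀ x, |g x| ≤ b := fun x => (hb0 x).trans (le_max_left _ _)
  have hbnn : (0:ℝ) ≤ b := le_max_right _ _
  set B' : ℝ := max B 0 with hB'def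
  have hB'nn : (0:ℝ) ≤ B' := le_max_right _ _
  have hBu : ∀ x, |u x| ≤ B' := fun x => (hB x).trans (le_max_left _ _)
  rw [Metric.tendsto_atTop]
  intro ε hε
  set δ : ℝ := ε / 3 / (2 * b * B' * M + 1) with hδdef
  have hden : (0:ℝ) < 2 * b * B' * M + 1 := by positivity
  have hδpos : 0 < δ := by positivity
  obtain ⟨G, hGopen, hGc, hGcont⟩ := huqc (ENNReal.ofReal δ) (by simpa using hδpos)
  have hGclosed : IsClosed (Gᶜ) := hGopen.isClosed_compl
  obtain ⟨e, he⟩ :=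
    (⟨(Gᶜ : Set X).restrict u, hGcont.restrict⟩ : C((Gᶜ : Set X), ℝ)).exists_restrict_eq hGclosed
  have heeq : ∀ x ∈ (Gᶜ : Set X), e x = u x := by
    intro x hx
    have := ContinuousMap.congr_fun he ⟨x, hx⟩
    exact this
  set φ : X → ℝ := fun x => max (-B') (min B' (e x)) with hφdef
  have hφcont : Continuous φ := continuous_const.max (continuous_const.min e.continuous)
  have hφb : ∀ x, |φ x| ≤ B' := by
    intro x
    rw [abs_le]
    constructor
    · exact le_trans (by linarith) (le_max_left _ _)
    · exact max_le (by linarith) (min_le_left _ _)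
  have hφeq : ∀ x ∈ (Gᶜ : Set X), φ x = u x := by
    intro x hx
    have h1 := abs_le.1 (hBu x)
    simp only [hφdef, heeq x hx]
    rw [min_eq_right h1.2, max_eq_right h1.1]
  -- key bound on the difference of integrals
  have key : ∀ (μ : Measure X), IsFiniteMeasure μ → μ G ≤ ENNReal.ofReal M * c G →
      |(∫ x, g x * u x ∂μ) - ∫ x, g x * φ x ∂μ| ≤ ε / 3 := by
    intro μ hμfin hμG
    haveI := hμfin
    have hμGδ : μ G ≤ ENNReal.ofReal (M * δ) := by
      refine hμG.trans ?_
      rw [ENNReal.ofReal_mul hM]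
      exact mul_le_mul_right hGc.le _
    have hμGr : (μ G).toReal ≤ M * δ :=
      ENNReal.toReal_le_of_le_ofReal (by positivity) hμGδ
    have hint1 : Integrable (fun x => g x * u x) μ :=
      ⟨(hg.measurable.mul hu).aestronglyMeasurable,
        HasFiniteIntegral.of_bounded (C := b * B') (ae_of_all _ fun x => by
          rw [Real.norm_eq_abs, abs_mul]
          exact mul_le_mul (hgb' x) (hBu x) (abs_nonneg _) hbnn)⟩
    have hint2 : Integrable (fun x => g x * φ x) μ :=
      ⟨(hg.mul hφcont).aestronglyMeasurable,
        HasFiniteIntegral.of_bounded (C := b * B') (ae_of_all _ fun x => by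
          rw [Real.norm_eq_abs, abs_mul]
          exact mul_le_mul (hgb' x) (hφb x) (abs_nonneg _) hbnn)⟩
    rw [← integral_sub hint1 hint2]
    set h : X → ℝ := fun x => g x * u x - g x * φ x with hhdef
    have hzero : ∀ x ∈ (Gᶜ : Set X), h x = 0 := by
      intro x hx; simp [hhdef, hφeq x hx]
    have hind : h = G.indicator h := by
      funext x
      by_cases hx : x ∈ G
      · simp [Set.indicator_of_mem hx]
      · simp [Set.indicator_of_notMem hx, hzero x hx]
    have hnorm : ‖∫ x in G, h x ∂μ‖ ≤ (b * (2 * B')) * (μ G).toReal := by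
      refine norm_setIntegral_le_of_norm_le_const (measure_lt_top _ _)
        fun x _ => ?_
      have : h x = g x * (u x - φ x) := by rw [hhdef]; ring
      rw [Real.norm_eq_abs, this, abs_mul]
      refine mul_le_mul (hgb' x) ?_ (abs_nonneg _) hbnn
      calc |u x - φ x| ≤ |u x| + |φ x| := abs_sub _ _
        _ ≤ B' + B' := add_le_add (hBu x) (hφb x)
        _ = 2 * B' := by ring
    have hstep : (b * (2 * B')) * (μ G).toReal ≤ (2 * b * B' * M) * δ := by
      calc (b * (2 * B')) * (μ G).toReal ≤ (b * (2 * B')) * (M * δ) :=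
            mul_le_mul_of_nonneg_left hμGr (by positivity)
        _ = (2 * b * B' * M) * δ := by ring
    have hfinal : (2 * b * B' * M) * δ ≤ ε / 3 := by
      rw [hδdef]
      have h2 : 2 * b * B' * M ≤ 2 * b * B' * M + 1 := by linarith
      calc (2 * b * B' * M) * (ε / 3 / (2 * b * B' * M + 1))
          = (2 * b * B' * M / (2 * b * B' * M + 1)) * (ε / 3) := by ring
        _ ≤ 1 * (ε / 3) :=
            mul_le_mul_of_nonneg_right ((div_le_one hden).2 h2) (by positivity)
        _ = ε / 3 := one_mul _
    calc |∫ x, h x ∂μ| = ‖∫ x in G, h x ∂μ‖ := by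
          rw [Real.norm_eq_abs, ← integral_indicator hGopen.measurableSet, ← hind]
      _ ≤ (b * (2 * B')) * (μ G).toReal := hnorm
      _ ≤ ε / 3 := hstep.trans hfinal
  -- convergence for the continuous approximation
  have hφconv := hconv (fun x => g x * φ x) (hg.mul hφcont)
    ⟨b * B', fun x => by
      rw [abs_mul]; exact mul_le_mul (hgb' x) (hφb x) (abs_nonneg _) hbnn⟩
  rw [Metric.tendsto_atTop] at hφconv
  obtain ⟨N, hN⟩ := hφconv (ε / 3) (by positivity)
  refine ⟨N, fun n hn => ?_⟩
  have h1 := key (νs n) (hνs n) (hdomνs n G hGopen.measurableSet)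
  have h2 := key ν hν (hdomν G hGopen.measurableSet)
  have h3 := hN n hn
  rw [Real.dist_eq] at h3 ⊢
  calc |(∫ x, g x * u x ∂νs n) - ∫ x, g x * u x ∂ν|
      ≤ |(∫ x, g x * u x ∂νs n) - ∫ x, g x * φ x ∂νs n|
        + |(∫ x, g x * φ x ∂νs n) - ∫ x, g x * φ x ∂ν|
        + |(∫ x, g x * φ x ∂ν) - ∫ x, g x * u x ∂ν| := by
        have := abs_sub_le ((∫ x, g x * u x ∂νs n)) (∫ x, g x * φ x ∂νs n)
          (∫ x, g x * u x ∂ν)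
        have := abs_sub_le ((∫ x, g x * φ x ∂νs n)) (∫ x, g x * φ x ∂ν)
          (∫ x, g x * u x ∂ν)
        linarith [abs_sub_le ((∫ x, g x * u x ∂νs n)) (∫ x, g x * φ x ∂νs n)
          (∫ x, g x * u x ∂ν), abs_sub_le ((∫ x, g x * φ x ∂νs n))
          (∫ x, g x * φ x ∂ν) (∫ x, g x * u x ∂ν)]
    _ < ε := by
        have h2' : |(∫ x, g x * φ x ∂ν) - ∫ x, g x * u x ∂ν| ≤ ε / 3 := by
          rw [abs_sub_comm]; exact h2
        linarith
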